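/- For every integer n ≥ 6, φ(C(n,3) + 1) ≤ n − 1. -/

import Mathlib

open Finset Matrix

/-- The sign `[T : e]` of an edge `e` in a triangle `T`. -/
noncomputable def triSign (T e : Finset ℕ) : ℝ :=
  if e ⊆ T ∧ e.card = 2 ∧ T.card = 3 then
    if (T \ e).max = T.max ∨ (T \ e).min = T.min then 1 else -1
  else 0

/-- A triangle family: a nonempty finite set of 3-element subsets of ℕ. -/
def IsTriFam (F : Finset (Finset ℕ)) : Prop :=
  F.Nonempty ∧ ∀ T ∈ F, T.card = 3

/-- The edges of the support graph of a triangle family. -/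
def edgesOf (F : Finset (Finset ℕ)) : Finset (Finset ℕ) :=
  F.biUnion fun T => T.powersetCard 2

/-- The vertices of the support graph of a triangle family. -/
def vertsOf (F : Finset (Finset ℕ)) : Finset ℕ :=
  F.biUnion id

/-- The signed edge-triangle incidence matrix of a triangle family. -/
noncomputable def delta1 (F : Finset (Finset ℕ)) :
    Matrix {T // T ∈ F} {e // e ∈ edgesOf F} ℝ :=
  Matrix.of fun T e => triSign T.1 e.1

/-- The smallest positive eigenvalue of a matrix. -/
noncomputable def lambdaMinPos {m : Type*} [Fintype m] (M : Matrix m m ℝ) : ℝ :=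
  sInf {μ : ℝ | 0 < μ ∧ ∃ v : m → ℝ, v ≠ 0 ∧ M.mulVec v = μ • v}

/-- `λ(𝒯)`: the smallest positive eigenvalue of `δ₁(𝒯)ᵀ δ₁(𝒯)`. -/
noncomputable def lam (F : Finset (Finset ℕ)) : ℝ :=
  lambdaMinPos ((delta1 F)ᵀ * delta1 F)

/-- The neighborhood of `x` in the support graph `Γ₀(F)`. -/
def nbrs (F : Finset (Finset ℕ)) (x : ℕ) : Finset ℕ :=
  (vertsOf F).filter fun y => x ≠ y ∧ ∃ T ∈ F, x ∈ T ∧ y ∈ T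

/-- `φ(t)`: the maximum of `λ(𝒯)` over triangle families with `|𝒯| = t`. -/
noncomputable def phi (t : ℕ) : ℝ :=
  sSup {r : ℝ | ∃ F : Finset (Finset ℕ), IsTriFam F ∧ F.card = t ∧ lam F = r}

/-- `Λ(t) = max_{1 ≤ s ≤ t} φ(s)`. -/
noncomputable def Lam (t : ℕ) : ℝ :=
  sSup {r : ℝ | ∃ s : ℕ, 1 ≤ s ∧ s ≤ t ∧ phi s = r}

/-- `H(n) = min{ s ≥ 1 : φ(C(n,3)+s) > n - 1 }`. -/
noncomputable def Hfun (n : ℕ) : ℕ :=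
  sInf {s : ℕ | 1 ≤ s ∧ (n : ℝ) - 1 < phi (n.choose 3 + s)}

/-- The triangle family `𝒯_{c,b}`: all 3-cliques of `K_c ∨ (b isolated vertices)`. -/
def Tcb (c b : ℕ) : Finset (Finset ℕ) :=
  ((Finset.Icc 1 c).powersetCard 3) ∪
    (Finset.Icc (c+1) (c+b)).biUnion
      (fun i => ((Finset.Icc 1 c).powersetCard 2).image (fun p => insert i p))


section Aux

open scoped InnerProductSpace

lemma dot_eq_inner {m : Type*} [Fintype m] (x y : EuclideanSpace ℝ m) :
    (x : m → ℝ) ⬝ᵥ (y : m → ℝ) = ⟪x, y⟫_ℝ := by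
  simp [PiLp.inner_apply, RCLike.inner_apply, dotProduct, mul_comm]

lemma sum_dotProduct' {ι m : Type*} [Fintype m] (s : Finset ι) (f : ι → m → ℝ) (y : m → ℝ) :
    (∑ i ∈ s, f i) ⬝ᵥ y = ∑ i ∈ s, f i ⬝ᵥ y := by
  simp only [dotProduct, Finset.sum_apply, Finset.sum_mul]
  exact Finset.sum_comm

lemma dotProduct_sum' {ι m : Type*} [Fintype m] (s : Finset ι) (y : m → ℝ) (f : ι → m → ℝ) :
    y ⬝ᵥ (∑ i ∈ s, f i) = ∑ i ∈ s, y ⬝ᵥ f i := by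
  simp only [dotProduct, Finset.sum_apply, Finset.mul_sum]
  exact Finset.sum_comm

lemma lemA {m : Type*} [Fintype m] [DecidableEq m] (B : Matrix m m ℝ)
    (hB : B.PosSemidef) {c : ℝ} (hc : 0 < c) (u : m → ℝ)
    (h1 : B.mulVec u ≠ 0)
    (h2 : B.mulVec u ⬝ᵥ B.mulVec u ≤ c * (u ⬝ᵥ B.mulVec u)) :
    lambdaMinPos B ≤ c := by
  by_contra hlt
  push_neg at hlt
  have hbdd : BddBelow {μ : ℝ | 0 < μ ∧ ∃ v : m → ℝ, v ≠ 0 ∧ B.mulVec v = μ • v} :=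
    ⟨0, fun μ hμ => le_of_lt hμ.1⟩
  have hmem : ∀ μ : ℝ, (0 < μ ∧ ∃ v : m → ℝ, v ≠ 0 ∧ B.mulVec v = μ • v) → c < μ :=
    fun μ hμ => lt_of_lt_of_le hlt (csInf_le hbdd hμ)
  have hH := hB.isHermitian
  set w : m → EuclideanSpace ℝ m := fun i => hH.eigenvectorBasis i with hw
  set ev : m → ℝ := hH.eigenvalues with hev
  have heig : ∀ i, B.mulVec (w i) = ev i • (w i : m → ℝ) := fun i => hH.mulVec_eigenvectorBasis i
  have hnn : ∀ i, 0 ≤ ev i := fun i => hB.eigenvalues_nonneg i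
  have hcase : ∀ i, ev i = 0 ∨ c < ev i := by
    intro i
    rcases eq_or_lt_of_le (hnn i) with h0 | hpos
    · exact Or.inl h0.symm
    · refine Or.inr (hmem _ ⟨hpos, w i, ?_, heig i⟩)
      intro hzero
      exact hH.eigenvectorBasis.orthonormal.ne_zero i (by ext j; exact congrFun hzero j)
  set cf : m → ℝ := fun i => hH.eigenvectorBasis.repr (WithLp.toLp 2 u) i with hcf
  have hsum : ∑ i, cf i • (w i : m → ℝ) = u := by
    have h := congrArg WithLp.ofLp (hH.eigenvectorBasis.sum_repr (WithLp.toLp 2 u))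
    rw [WithLp.ofLp_sum] at h
    simp only [WithLp.ofLp_smul, WithLp.ofLp_toLp] at h
    exact h
  have hBu : B.mulVec u = ∑ i, (ev i * cf i) • (w i : m → ℝ) := by
    conv_lhs => rw [← hsum]
    rw [show B.mulVec (∑ i, cf i • (w i : m → ℝ)) = B.mulVecLin (∑ i, cf i • (w i : m → ℝ)) from rfl]
    rw [map_sum]
    refine Finset.sum_congr rfl fun i _ => ?_
    rw [LinearMap.map_smul]
    show cf i • B.mulVec (w i) = _
    rw [heig i, smul_smul, mul_comm]
  have horth : ∀ i j, (w i : m → ℝ) ⬝ᵥ (w j : m → ℝ) = if i = j then 1 else 0 := by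
    intro i j
    rw [dot_eq_inner]
    exact orthonormal_iff_ite.mp hH.eigenvectorBasis.orthonormal i j
  have key : ∀ a b : m → ℝ,
      (∑ i, a i • (w i : m → ℝ)) ⬝ᵥ (∑ j, b j • (w j : m → ℝ)) = ∑ i, a i * b i := by
    intro a b
    rw [sum_dotProduct']
    refine Finset.sum_congr rfl fun i _ => ?_
    rw [dotProduct_sum']
    rw [Finset.sum_eq_single i]
    · rw [smul_dotProduct, dotProduct_smul, horth, if_pos rfl]
      simp
    · intro j _ hj
      rw [smul_dotProduct, dotProduct_smul, horth, if_neg (Ne.symm hj)]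
      simp
    · intro h; exact absurd (Finset.mem_univ i) h
  have e1 : B.mulVec u ⬝ᵥ B.mulVec u = ∑ i, (ev i * cf i) * (ev i * cf i) := by
    rw [hBu]; exact key _ _
  have e2 : u ⬝ᵥ B.mulVec u = ∑ i, cf i * (ev i * cf i) := by
    rw [hBu]
    conv_lhs => rw [← hsum]
    exact key _ _
  have hwit : ∃ i, ev i * cf i ≠ 0 := by
    by_contra hall
    push_neg at hall
    apply h1
    rw [hBu]
    refine Finset.sum_eq_zero fun i _ => ?_
    rw [hall i, zero_smul]
  obtain ⟨i0, hi0⟩ := hwit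
  have hterm : ∀ i, c * (cf i * (ev i * cf i)) ≤ (ev i * cf i) * (ev i * cf i) := by
    intro i
    rcases hcase i with h | h
    · simp [h]
    · have h1' : 0 ≤ (ev i - c) * (ev i * (cf i * cf i)) :=
        mul_nonneg (by linarith) (mul_nonneg (hnn i) (mul_self_nonneg _))
      nlinarith [h1']
  have hterm0 : c * (cf i0 * (ev i0 * cf i0)) < (ev i0 * cf i0) * (ev i0 * cf i0) := by
    rcases hcase i0 with h | h
    · rw [h] at hi0; simp at hi0
    · have hcf : cf i0 ≠ 0 := fun h' => hi0 (by rw [h']; ring)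
      have h1' : 0 < (ev i0 - c) * (ev i0 * (cf i0 * cf i0)) :=
        mul_pos (by linarith) (mul_pos (by linarith) (mul_self_pos.mpr hcf))
      nlinarith [h1']
  have hlt2 : c * (u ⬝ᵥ B.mulVec u) < B.mulVec u ⬝ᵥ B.mulVec u := by
    rw [e1, e2, Finset.mul_sum]
    exact Finset.sum_lt_sum (fun i _ => hterm i) ⟨i0, Finset.mem_univ _, hterm0⟩
  linarith


lemma triSign_eq_zero {T e : Finset ℕ} (h : ¬ (e ⊆ T ∧ e.card = 2 ∧ T.card = 3)) :
    triSign T e = 0 := by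
  rw [triSign, if_neg h]

lemma triSign_cases (T e : Finset ℕ) :
    triSign T e = 1 ∨ triSign T e = -1 ∨ triSign T e = 0 := by
  unfold triSign
  split_ifs <;> simp

lemma triSign_sq {T e : Finset ℕ} (h1 : e ⊆ T) (h2 : e.card = 2) (h3 : T.card = 3) :
    triSign T e * triSign T e = 1 := by
  unfold triSign
  rw [if_pos ⟨h1, h2, h3⟩]
  split_ifs <;> norm_num

lemma mem_edgesOf {F : Finset (Finset ℕ)} {e : Finset ℕ} :
    e ∈ edgesOf F ↔ ∃ T ∈ F, e ⊆ T ∧ e.card = 2 := by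
  simp [edgesOf, Finset.mem_powersetCard]

lemma tri_eq {T e e' : Finset ℕ} (hT : T.card = 3) (he : e.card = 2) (he' : e'.card = 2)
    (hne : e ≠ e') (h1 : e ⊆ T) (h2 : e' ⊆ T) : T = e ∪ e' := by
  have hsub : e ∪ e' ⊆ T := Finset.union_subset h1 h2
  have hlt : e ⊂ e ∪ e' := by
    refine Finset.ssubset_iff_subset_ne.mpr ⟨Finset.subset_union_left, ?_⟩
    intro h
    exact hne (Finset.eq_of_subset_of_card_le (h ▸ Finset.subset_union_right)
      (by rw [he, he'])).symm
  have hc : 2 < (e ∪ e').card := by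
    rw [← he]; exact Finset.card_lt_card hlt
  exact (Finset.eq_of_subset_of_card_le hsub (by omega)).symm


lemma counting (n : ℕ) (hn : 6 ≤ n) (F : Finset (Finset ℕ))
    (hT3 : ∀ T ∈ F, T.card = 3)
    (hcard : F.card = n.choose 3 + 1)
    (hcase : ∀ e ∈ edgesOf F, n ≤ #(F.filter fun T => e ⊆ T) + 2) : False := by
  classical
  set E := edgesOf F with hE
  set V := vertsOf F with hV
  have hTsubV : ∀ T ∈ F, T ⊆ V := fun T hT x hx => Finset.mem_biUnion.mpr ⟨T, hT, hx⟩
  -- sum of edge multiplicities = 3 |F|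
  have hsum3 : ∑ e ∈ E, #(F.filter fun T => e ⊆ T) = 3 * F.card := by
    have h1 : ∀ e, #(F.filter fun T => e ⊆ T) = ∑ T ∈ F, if e ⊆ T then 1 else 0 :=
      fun e => Finset.card_filter _ _
    simp_rw [h1]
    rw [Finset.sum_comm]
    have h2 : ∀ T ∈ F, (∑ e ∈ E, if e ⊆ T then 1 else 0) = 3 := by
      intro T hT
      rw [← Finset.card_filter]
      have h3 : E.filter (fun e => e ⊆ T) = T.powersetCard 2 := by
        ext e'
        simp only [Finset.mem_filter, Finset.mem_powersetCard]
        constructor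
        · rintro ⟨heE, hsub⟩
          obtain ⟨T', _, _, hc⟩ := mem_edgesOf.mp heE
          exact ⟨hsub, hc⟩
        · rintro ⟨hsub, hc⟩
          exact ⟨mem_edgesOf.mpr ⟨T, hT, hsub, hc⟩, hsub⟩
      rw [h3, Finset.card_powersetCard, hT3 T hT]
      rfl
    rw [Finset.sum_congr rfl h2, Finset.sum_const, smul_eq_mul, mul_comm]
  -- handshake
  have hhand : ∑ x ∈ V, #(E.filter fun e => x ∈ e) = 2 * E.card := by
    have h1 : ∀ x, #(E.filter fun e => x ∈ e) = ∑ e ∈ E, if x ∈ e then 1 else 0 :=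
      fun x => Finset.card_filter _ _
    simp_rw [h1]
    rw [Finset.sum_comm]
    have h2 : ∀ e ∈ E, (∑ x ∈ V, if x ∈ e then 1 else 0) = 2 := by
      intro e heE
      rw [← Finset.card_filter]
      obtain ⟨T, hT, hsub, hc⟩ := mem_edgesOf.mp heE
      have h3 : V.filter (fun x => x ∈ e) = e := by
        ext x
        simp only [Finset.mem_filter]
        exact ⟨fun h => h.2, fun h => ⟨hTsubV T hT (hsub h), h⟩⟩
      rw [h3, hc]
    rw [Finset.sum_congr rfl h2, Finset.sum_const, smul_eq_mul, mul_comm]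
  -- vertex degree lower bound
  have hdegx : ∀ x ∈ V, n ≤ #(E.filter fun e => x ∈ e) + 1 := by
    intro x hx
    obtain ⟨T, hT, hxT⟩ := Finset.mem_biUnion.mp hx
    have hxT : x ∈ T := hxT
    have hT3' := hT3 T hT
    have hzne : (T.erase x).Nonempty := by
      rw [← Finset.card_pos, Finset.card_erase_of_mem hxT, hT3']
      norm_num
    obtain ⟨z, hz'⟩ := hzne
    have hzT : z ∈ T := Finset.mem_of_mem_erase hz'
    have hzx : z ≠ x := Finset.ne_of_mem_erase hz'
    set e := T.erase z with he
    have hxe : x ∈ e := Finset.mem_erase.mpr ⟨fun h => hzx h.symm, hxT⟩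
    have he2 : e.card = 2 := by rw [he, Finset.card_erase_of_mem hzT, hT3']
    have heT : e ⊆ T := Finset.erase_subset _ _
    have heE : e ∈ E := mem_edgesOf.mpr ⟨T, hT, heT, he2⟩
    have hme : n ≤ #(F.filter fun T' => e ⊆ T') + 2 := hcase e heE
    have hinj : #(F.filter fun T' => e ⊆ T') ≤ #((E.filter fun e' => x ∈ e').erase e) := by
      apply Finset.card_le_card_of_injOn (fun T' => insert x (T' \ e))
      · intro T' hT'
        obtain ⟨hT'F, heT'⟩ := Finset.mem_filter.mp hT'
        have hT'3 := hT3 T' hT'F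
        have hcd : (T' \ e).card = 1 := by rw [Finset.card_sdiff_of_subset heT', hT'3, he2]
        obtain ⟨v, hv⟩ := Finset.card_eq_one.mp hcd
        have hvm : v ∈ T' \ e := by rw [hv]; exact Finset.mem_singleton_self v
        have hvT' : v ∈ T' := (Finset.mem_sdiff.mp hvm).1
        have hvne : v ∉ e := (Finset.mem_sdiff.mp hvm).2
        have hxv : x ≠ v := fun h => hvne (h ▸ hxe)
        simp only [Finset.mem_coe]
        rw [hv]
        refine Finset.mem_erase.mpr ⟨?_, Finset.mem_filter.mpr ⟨?_, Finset.mem_insert_self x _⟩⟩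
        · intro hcontra
          apply hvne
          rw [← hcontra]
          exact Finset.mem_insert.mpr (Or.inr (Finset.mem_singleton_self v))
        · refine mem_edgesOf.mpr ⟨T', hT'F, ?_, ?_⟩
          · intro y hy
            rcases Finset.mem_insert.mp hy with h | h
            · exact h ▸ heT' hxe
            · exact (Finset.mem_singleton.mp h) ▸ hvT'
          · rw [Finset.card_insert_of_notMem (fun h => hxv (Finset.mem_singleton.mp h)),
              Finset.card_singleton]
      · intro T₁ h₁ T₂ h₂ heq
        have h₁' := Finset.mem_filter.mp (Finset.mem_coe.mp h₁)
        have h₂' := Finset.mem_filter.mp (Finset.mem_coe.mp h₂)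
        have hx1 : x ∉ T₁ \ e := fun h => (Finset.mem_sdiff.mp h).2 hxe
        have hx2 : x ∉ T₂ \ e := fun h => (Finset.mem_sdiff.mp h).2 hxe
        have hs : T₁ \ e = T₂ \ e := by
          have := congrArg (fun s => Finset.erase s x) heq
          simpa [Finset.erase_insert hx1, Finset.erase_insert hx2] using this
        calc T₁ = e ∪ T₁ \ e := (Finset.union_sdiff_of_subset h₁'.2).symm
          _ = e ∪ T₂ \ e := by rw [hs]
          _ = T₂ := Finset.union_sdiff_of_subset h₂'.2
    have hcnt : #(F.filter fun T' => e ⊆ T') + 1 ≤ #(E.filter fun e' => x ∈ e') := by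
      have hmem : e ∈ E.filter fun e' => x ∈ e' := Finset.mem_filter.mpr ⟨heE, hxe⟩
      have := Finset.card_erase_add_one hmem
      omega
    omega
  -- |V| ≥ n + 1
  have hVc : n + 1 ≤ V.card := by
    by_contra h
    push_neg at h
    have hsubF : F ⊆ V.powersetCard 3 :=
      fun T hT => Finset.mem_powersetCard.mpr ⟨hTsubV T hT, hT3 T hT⟩
    have h1 := Finset.card_le_card hsubF
    rw [Finset.card_powersetCard] at h1
    have h2 := Nat.choose_le_choose 3 (show V.card ≤ n by omega)
    omega
  -- assemble
  have hA : n * V.card ≤ 2 * E.card + V.card := by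
    calc n * V.card = ∑ _x ∈ V, n := by rw [Finset.sum_const, smul_eq_mul, mul_comm]
      _ ≤ ∑ x ∈ V, (#(E.filter fun e => x ∈ e) + 1) := Finset.sum_le_sum hdegx
      _ = (∑ x ∈ V, #(E.filter fun e => x ∈ e)) + V.card := by
          rw [Finset.sum_add_distrib, Finset.sum_const, smul_eq_mul, mul_one]
      _ = 2 * E.card + V.card := by rw [hhand]
  have hB : n * E.card ≤ 3 * F.card + 2 * E.card := by
    calc n * E.card = ∑ _e ∈ E, n := by rw [Finset.sum_const, smul_eq_mul, mul_comm]
      _ ≤ ∑ e ∈ E, (#(F.filter fun T => e ⊆ T) + 2) :=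
          Finset.sum_le_sum (fun e he => hcase e he)
      _ = 3 * F.card + 2 * E.card := by
          rw [Finset.sum_add_distrib, hsum3, Finset.sum_const, smul_eq_mul, mul_comm E.card 2]
  have hch : 6 * n.choose 3 = n * (n-1) * (n-2) := by
    have h := Nat.descFactorial_eq_factorial_mul_choose n 3
    simp [Nat.descFactorial_succ, Nat.descFactorial_zero, Nat.factorial] at h
    rw [← h]; ring
  obtain ⟨k, rfl⟩ := Nat.exists_eq_add_of_le hn
  have e1 : 6 + k - 1 = 5 + k := by omega
  have e2 : 6 + k - 2 = 4 + k := by omega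
  rw [e1, e2] at hch
  rw [hcard] at hB
  set Vc := V.card
  set Ec := E.card
  set ch := (6+k).choose 3
  have s1 : (5 + k) * Vc ≤ 2 * Ec := by nlinarith [hA, hVc]
  have hVc' : 7 + k ≤ Vc := by omega
  have s2 : (5 + k) * (7 + k) ≤ 2 * Ec :=
    le_trans (Nat.mul_le_mul_left _ hVc') s1
  have s3 : (4 + k) * (2 * Ec) ≤ 2 * (3 * (ch + 1)) := by nlinarith [hB]
  nlinarith [s2, s3, hch]


lemma delta1_psd (F : Finset (Finset ℕ)) : ((delta1 F)ᵀ * delta1 F).PosSemidef := by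
  have h : (delta1 F)ᵀ = (delta1 F)ᴴ := by
    ext i j
    simp [Matrix.conjTranspose_apply]
  rw [h]
  exact Matrix.posSemidef_conjTranspose_mul_self _

lemma B_apply (F : Finset (Finset ℕ)) (e₁ e₂ : {e // e ∈ edgesOf F}) :
    ((delta1 F)ᵀ * delta1 F) e₁ e₂ = ∑ T ∈ F, triSign T e₁.1 * triSign T e₂.1 := by
  rw [Matrix.mul_apply, ← Finset.sum_coe_sort F (fun T => triSign T e₁.1 * triSign T e₂.1)]
  rfl

section Case1
variable {F : Finset (Finset ℕ)}

lemma case1 (n : ℕ) (hn : 6 ≤ n) (hF3 : ∀ T ∈ F, T.card = 3)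
    (e : Finset ℕ) (heE : e ∈ edgesOf F)
    (hme : #(F.filter fun T => e ⊆ T) + 3 ≤ n)
    (hlemA : ∀ {c : ℝ}, 0 < c → ∀ u : {e' // e' ∈ edgesOf F} → ℝ,
      ((delta1 F)ᵀ * delta1 F).mulVec u ≠ 0 →
      ((delta1 F)ᵀ * delta1 F).mulVec u ⬝ᵥ ((delta1 F)ᵀ * delta1 F).mulVec u ≤
        c * (u ⬝ᵥ ((delta1 F)ᵀ * delta1 F).mulVec u) →
      lambdaMinPos ((delta1 F)ᵀ * delta1 F) ≤ c) :
    lambdaMinPos ((delta1 F)ᵀ * delta1 F) ≤ (n : ℝ) - 1 := by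
  classical
  obtain ⟨Te, hTe, heTe, he2⟩ := mem_edgesOf.mp heE
  set m : ℕ := #(F.filter fun T => e ⊆ T) with hm
  have hm1 : 1 ≤ m := Finset.card_pos.mpr ⟨Te, Finset.mem_filter.mpr ⟨hTe, heTe⟩⟩
  set B := (delta1 F)ᵀ * delta1 F with hB
  set ee : {e' // e' ∈ edgesOf F} := ⟨e, heE⟩ with hee
  set u : {e' // e' ∈ edgesOf F} → ℝ := Pi.single ee 1 with hu
  have hBu : B.mulVec u = fun e' => B e' ee := by
    rw [hu, Matrix.mulVec_single]
    funext e'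
    simp
  have hdiag : B ee ee = (m : ℝ) := by
    rw [hB, B_apply, hm]
    rw [← Finset.sum_boole]
    refine Finset.sum_congr rfl fun T hT => ?_
    by_cases hsub : e ⊆ T
    · rw [if_pos hsub]
      exact triSign_sq hsub he2 (hF3 T hT)
    · rw [if_neg hsub, triSign_eq_zero (fun hc => hsub hc.1), mul_zero]
  have hoff : ∀ e' : {e' // e' ∈ edgesOf F}, e' ≠ ee →
      (B e' ee) ^ 2 ≤ if e ∪ e'.1 ∈ F then (1 : ℝ) else 0 := by
    intro e' hne
    obtain ⟨T', hT', hsubT', he'2⟩ := mem_edgesOf.mp e'.2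
    have hne' : e'.1 ≠ e := fun h => hne (Subtype.ext h)
    rw [hB, B_apply]
    have hzero : ∀ T ∈ F, T ≠ e ∪ e'.1 → triSign T e'.1 * triSign T ee.1 = 0 := by
      intro T hT hTne
      by_cases h1 : e ⊆ T
      · by_cases h2 : e'.1 ⊆ T
        · exact absurd (tri_eq (hF3 T hT) he2 he'2 (Ne.symm hne') h1 h2) hTne
        · rw [triSign_eq_zero (fun hc => h2 hc.1), zero_mul]
      · rw [triSign_eq_zero (fun hc => h1 hc.1), mul_zero]
    by_cases hU : e ∪ e'.1 ∈ F
    · rw [Finset.sum_eq_single_of_mem _ hU hzero, if_pos hU]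
      rcases triSign_cases (e ∪ e'.1) e'.1 with h | h | h <;>
        rcases triSign_cases (e ∪ e'.1) ee.1 with h' | h' | h' <;>
        rw [h, h'] <;> norm_num
    · rw [Finset.sum_eq_zero (fun T hT => hzero T hT (fun hh => hU (hh ▸ hT))), if_neg hU]
      norm_num
  -- dot products
  have hdot : B.mulVec u ⬝ᵥ B.mulVec u = ∑ e' : {e' // e' ∈ edgesOf F}, (B e' ee) ^ 2 := by
    rw [hBu]
    simp [dotProduct, sq]
  have hsplit : B.mulVec u ⬝ᵥ B.mulVec u ≤ (m : ℝ) ^ 2 + 2 * m := by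
    rw [hdot, ← Finset.add_sum_erase _ _ (Finset.mem_univ ee), hdiag]
    have hbound : ∑ e' ∈ Finset.univ.erase ee, (B e' ee) ^ 2 ≤ 2 * (m : ℝ) := by
      have step1 : ∑ e' ∈ Finset.univ.erase ee, (B e' ee) ^ 2 ≤
          ∑ e' ∈ Finset.univ.erase ee, if e ∪ e'.1 ∈ F then (1 : ℝ) else 0 :=
        Finset.sum_le_sum fun e' he' => hoff e' (Finset.ne_of_mem_erase he')
      have step2 : ∑ e' ∈ Finset.univ.erase ee, (if e ∪ e'.1 ∈ F then (1 : ℝ) else 0) =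
          #((Finset.univ.erase ee).filter fun e' => e ∪ e'.1 ∈ F) :=
        Finset.sum_boole _ _
      set A := (Finset.univ.erase ee).filter fun e' : {e' // e' ∈ edgesOf F} => e ∪ e'.1 ∈ F
        with hA
      have hAcard : A.card ≤ 2 * m := by
        rw [Finset.card_eq_sum_card_image (fun e' => e ∪ e'.1) A]
        have hfib : ∀ a ∈ A.image (fun e' => e ∪ e'.1),
            #(A.filter fun x => e ∪ x.1 = a) ≤ 2 := by
          intro a ha
          obtain ⟨e₀, he₀, rfl⟩ := Finset.mem_image.mp ha
          have haF : e ∪ e₀.1 ∈ F := (Finset.mem_filter.mp he₀).2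
          have ha3 : (e ∪ e₀.1).card = 3 := hF3 _ haF
          have hsub2 : e ⊆ e ∪ e₀.1 := Finset.subset_union_left
          have hemem : e ∈ (e ∪ e₀.1).powersetCard 2 :=
            Finset.mem_powersetCard.mpr ⟨hsub2, he2⟩
          have hcard : #(((e ∪ e₀.1).powersetCard 2).erase e) = 2 := by
            rw [Finset.card_erase_of_mem hemem, Finset.card_powersetCard, ha3]
            rfl
          rw [← hcard]
          apply Finset.card_le_card_of_injOn (fun x => x.1)
          · intro x hx
            obtain ⟨hxA, hxa⟩ := Finset.mem_filter.mp hx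
            have hxne : x ≠ ee := Finset.ne_of_mem_erase (Finset.mem_filter.mp hxA).1
            obtain ⟨Tx, hTx, hsx, hcx⟩ := mem_edgesOf.mp x.2
            refine Finset.mem_erase.mpr ⟨fun h => hxne (Subtype.ext h), ?_⟩
            exact Finset.mem_powersetCard.mpr ⟨hxa ▸ Finset.subset_union_right, hcx⟩
          · intro x _ y _ hxy
            exact Subtype.ext hxy
        calc ∑ a ∈ A.image (fun e' => e ∪ e'.1), #(A.filter fun x => e ∪ x.1 = a)
            ≤ ∑ _a ∈ A.image (fun e' => e ∪ e'.1), 2 := Finset.sum_le_sum hfib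
          _ = 2 * #(A.image fun e' => e ∪ e'.1) := by
              rw [Finset.sum_const, smul_eq_mul, mul_comm]
          _ ≤ 2 * m := by
              apply Nat.mul_le_mul_left
              rw [hm]
              apply Finset.card_le_card
              intro a ha
              obtain ⟨e₀, he₀, rfl⟩ := Finset.mem_image.mp ha
              exact Finset.mem_filter.mpr ⟨(Finset.mem_filter.mp he₀).2,
                Finset.subset_union_left⟩
      calc ∑ e' ∈ Finset.univ.erase ee, (B e' ee) ^ 2 ≤ (A.card : ℝ) := by
            rw [← step2] at *; exact le_of_le_of_eq step1 step2
        _ ≤ 2 * (m : ℝ) := by exact_mod_cast hAcard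
    nlinarith [hbound]
  have hBuee : B.mulVec u ee = (m : ℝ) := by rw [hBu]; exact hdiag
  have hne0 : B.mulVec u ≠ 0 := by
    intro h
    rw [h] at hBuee
    have : (0 : ℝ) = m := hBuee
    have : (0 : ℝ) < m := by exact_mod_cast hm1
    linarith
  have hudot : u ⬝ᵥ B.mulVec u = (m : ℝ) := by
    rw [hu, single_dotProduct, one_mul, ← hu, hBuee]
  have hc' : (0 : ℝ) < (n : ℝ) - 1 := by
    have : (6 : ℝ) ≤ n := by exact_mod_cast hn
    linarith
  apply hlemA hc' u hne0
  rw [hudot]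
  have hmn : (m : ℝ) + 3 ≤ n := by exact_mod_cast hme
  have hm0 : (0 : ℝ) < m := by exact_mod_cast hm1
  nlinarith [hsplit]

end Case1


lemma lam_le_of (n : ℕ) (hn : 6 ≤ n) (F : Finset (Finset ℕ)) (hF : IsTriFam F)
    (hcard : F.card = n.choose 3 + 1) : lam F ≤ (n : ℝ) - 1 := by
  classical
  by_cases hc : ∃ e ∈ edgesOf F, #(F.filter fun T => e ⊆ T) + 3 ≤ n
  · obtain ⟨e, heE, hme⟩ := hc
    exact case1 n hn hF.2 e heE hme (fun {c} hc0 u h1 h2 => lemA _ (delta1_psd F) hc0 u h1 h2)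
  · exfalso
    push_neg at hc
    exact counting n hn F hF.2 hcard (fun e he => by have := hc e he; omega)

end Aux

/-- For every `n ≥ 6`, `φ(C(n,3) + 1) ≤ n - 1`. -/
theorem stmt11 (n : ℕ) (hn : 6 ≤ n) : phi (n.choose 3 + 1) ≤ (n : ℝ) - 1 := by
  have h0 : (0:ℝ) ≤ (n:ℝ) - 1 := by
    have h6 : (6:ℝ) ≤ (n:ℝ) := by exact_mod_cast hn
    linarith
  refine Real.sSup_le ?_ h0
  rintro r ⟨F, hFam, hcard, rfl⟩
  exact lam_le_of n hn F hFam hcard
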